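/- Let F be a 2-capturing construction scheme over ω₁, and for α ∈ ω₁ define f_α : ω → ω by f_α(l) = |(α)_l|. Then the family B_F = {f_α | α ∈ ω₁}, ordered by pointwise domination ≤, contains no uncountable set of pairwise incomparable elements. -/

import Mathlib

open Set

/-- A *type* for construction schemes: a sequence `(m_k, n_{k+1}, r_{k+1})`. -/
structure CSType where
  m : ℕ → ℕ
  n : ℕ → ℕ
  r : ℕ → ℕ
  m_zero : m 0 = 1
  n_ge : ∀ k, 1 ≤ k → 2 ≤ n k
  r_inf : ∀ j N, ∃ k, N ≤ k ∧ 1 ≤ k ∧ r k = j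
  r_lt : ∀ k, r (k + 1) < m k
  m_rec : ∀ k, m (k + 1) = r (k + 1) + (m k - r (k + 1)) * n (k + 1)

/-- `C` is an initial segment of `A` (written `C ⊑ A` in the paper). -/
def InitSeg (C A : Finset Ordinal) : Prop :=
  C ⊆ A ∧ ∀ c ∈ C, ∀ d ∈ A, d ≤ c → d ∈ C

/-- `D` (with root `R`) is the canonical decomposition of `F`, an element of rank `k+1`,
into `n_{k+1}` elements of rank `k` forming a Δ-system with root `R` of size `r_{k+1}`,
with `R < D 0 \ R < ⋯ < D (n_{k+1} - 1) \ R`. -/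
def CanonDecomp (τ : CSType) (𝓕 : Set (Finset Ordinal)) (k : ℕ)
    (F : Finset Ordinal) (D : Fin (τ.n (k + 1)) → Finset Ordinal)
    (R : Finset Ordinal) : Prop :=
  (∀ i, D i ∈ 𝓕 ∧ (D i).card = τ.m k) ∧
  (∀ x, x ∈ F ↔ ∃ i, x ∈ D i) ∧
  R.card = τ.r (k + 1) ∧
  (∀ i j, i ≠ j → D i ∩ D j = R) ∧
  (∀ a ∈ R, ∀ i, ∀ b ∈ D i, b ∉ R → a < b) ∧
  (∀ i j : Fin (τ.n (k + 1)), i < j → ∀ b ∈ D i, b ∉ R → ∀ c ∈ D j, c ∉ R → b < c)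

/-- `𝓕` is a construction scheme over the set of ordinals `X` of type `τ`.
Rank is measured by cardinality: an element of rank `k` has cardinality `m_k`. -/
structure IsConstructionScheme (τ : CSType) (X : Set Ordinal)
    (𝓕 : Set (Finset Ordinal)) : Prop where
  subset_X : ∀ F ∈ 𝓕, (F : Set Ordinal) ⊆ X
  card_mem : ∀ F ∈ 𝓕, ∃ k, F.card = τ.m k
  cofinal : ∀ A : Finset Ordinal, (A : Set Ordinal) ⊆ X → ∃ F ∈ 𝓕, A ⊆ F
  initSeg : ∀ k, ∀ E ∈ 𝓕, ∀ F ∈ 𝓕, E.card = τ.m k → F.card = τ.m k →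
    InitSeg (E ∩ F) E
  decomp : ∀ k, ∀ F ∈ 𝓕, F.card = τ.m (k + 1) →
    ∃! D : Fin (τ.n (k + 1)) → Finset Ordinal, ∃ R, CanonDecomp τ 𝓕 k F D R

/-- `ρ(α,β)`: the least `k` such that some element of `𝓕` of rank `k` contains both. -/
noncomputable def csRho (τ : CSType) (𝓕 : Set (Finset Ordinal)) (α β : Ordinal) : ℕ :=
  sInf {k | ∃ F ∈ 𝓕, F.card = τ.m k ∧ α ∈ F ∧ β ∈ F}

/-- The `k`-closure `(β)_k = {α ≤ β | ρ(α,β) ≤ k}` (within `X`). -/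
def csClos (τ : CSType) (𝓕 : Set (Finset Ordinal)) (X : Set Ordinal)
    (k : ℕ) (β : Ordinal) : Set Ordinal :=
  {α ∈ X | α ≤ β ∧ csRho τ 𝓕 α β ≤ k}

/-- `Δ(α,β) = min({k | |(α)_k| ≠ |(β)_k|} ∪ {ω})`, valued in `ℕ∞` (where `⊤` plays
the role of `ω`). -/
noncomputable def csDelta (τ : CSType) (𝓕 : Set (Finset Ordinal)) (X : Set Ordinal)
    (α β : Ordinal) : ℕ∞ :=
  sInf ((fun k : ℕ => (k : ℕ∞)) ''
    {k | (csClos τ 𝓕 X k α).ncard ≠ (csClos τ 𝓕 X k β).ncard})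

/-- The function `Ξ_α : ω → ω ∪ {-1}` associated to a construction scheme. -/
noncomputable def csXi (τ : CSType) (𝓕 : Set (Finset Ordinal)) (X : Set Ordinal)
    (α : Ordinal) (k : ℕ) : ℤ :=
  if k = 0 then 0
  else if (csClos τ 𝓕 X k α).ncard ≤ τ.r k then -1
  else (((csClos τ 𝓕 X k α).ncard : ℤ) - ((csClos τ 𝓕 X (k - 1) α).ncard : ℤ)) /
    ((τ.m (k - 1) : ℤ) - (τ.r k : ℤ))

/-- `F` (of rank `k+1`) captures the pair `{α, β}`: with canonical decomposition
`D` and root `R`, `α ∈ D 0 \ R`, `β ∈ D 1 \ R`, and the increasing bijection from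
`D 0` to `D 1` sends `α` to `β`. -/
def CapturesPair (τ : CSType) (𝓕 : Set (Finset Ordinal)) (k : ℕ)
    (F : Finset Ordinal) (α β : Ordinal) : Prop :=
  F ∈ 𝓕 ∧ F.card = τ.m (k + 1) ∧
  ∃ D R, CanonDecomp τ 𝓕 k F D R ∧
    ∃ (h0 : 0 < τ.n (k + 1)) (h1 : 1 < τ.n (k + 1)),
      α ∈ D ⟨0, h0⟩ ∧ α ∉ R ∧ β ∈ D ⟨1, h1⟩ ∧ β ∉ R ∧
      ((D ⟨0, h0⟩ : Set Ordinal) ∩ Set.Iic α).ncard =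
        ((D ⟨1, h1⟩ : Set Ordinal) ∩ Set.Iic β).ncard

/-- `𝓕` is 2-capturing: for every uncountable `S ⊆ X` and every `k₀` there are a pair
`{α, β} ∈ [S]²` and `F ∈ 𝓕` of rank `l > k₀` capturing it. -/
def TwoCapturing (τ : CSType) (X : Set Ordinal) (𝓕 : Set (Finset Ordinal)) : Prop :=
  ∀ S : Set Ordinal, S ⊆ X → ¬ S.Countable → ∀ k₀ : ℕ,
    ∃ k, k₀ ≤ k ∧ ∃ F α β, α ∈ S ∧ β ∈ S ∧ α < β ∧ CapturesPair τ 𝓕 k F α β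

section Aux

variable {τ : CSType} {𝓕 : Set (Finset Ordinal)}

local notation "X₁" => Set.Iio (Ordinal.omega 1)

theorem CSType.m_lt_succ (τ : CSType) (k : ℕ) : τ.m k < τ.m (k + 1) := by
  have hrec := τ.m_rec k
  have hr := τ.r_lt k
  have hn := τ.n_ge (k + 1) (by omega)
  have h2 : (τ.m k - τ.r (k + 1)) * 2 ≤ (τ.m k - τ.r (k + 1)) * τ.n (k + 1) :=
    Nat.mul_le_mul_left _ hn
  omega

theorem CSType.m_strictMono (τ : CSType) : StrictMono τ.m :=
  strictMono_nat_of_lt_succ τ.m_lt_succ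

theorem CSType.one_le_m (τ : CSType) (k : ℕ) : 1 ≤ τ.m k := by
  have h := τ.m_strictMono.monotone (Nat.zero_le k)
  have h0 := τ.m_zero
  omega

/-- Downward: every rank-`l` element has, around each of its points, a
rank-`k` subelement for every `k ≤ l`. -/
theorem downward (hCS : IsConstructionScheme τ X₁ 𝓕) :
    ∀ l k, k ≤ l → ∀ F ∈ 𝓕, F.card = τ.m l → ∀ x ∈ F,
      ∃ P, P ∈ 𝓕 ∧ P.card = τ.m k ∧ x ∈ P ∧ P ⊆ F := by
  intro l
  induction l with
  | zero =>
    intro k hk F hF hcard x hx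
    interval_cases k
    exact ⟨F, hF, hcard, hx, Finset.Subset.refl F⟩
  | succ j ih =>
    intro k hk F hF hcard x hx
    rcases Nat.eq_or_lt_of_le hk with rfl | hlt
    · exact ⟨F, hF, hcard, hx, Finset.Subset.refl F⟩
    · have hkj : k ≤ j := Nat.lt_succ_iff.mp hlt
      obtain ⟨D, ⟨R, hcd⟩, -⟩ := hCS.decomp j F hF hcard
      obtain ⟨hD, hDF, -, -, -, -⟩ := hcd
      obtain ⟨i, hi⟩ := (hDF x).1 hx
      obtain ⟨P, hP, hPcard, hxP, hPD⟩ := ih k hkj (D i) (hD i).1 (hD i).2 x hi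
      exact ⟨P, hP, hPcard, hxP, hPD.trans (fun y hy => (hDF y).2 ⟨i, hy⟩)⟩

/-- The `l`-closure of `β` equals `F ∩ (-∞, β]` for any `F ∈ 𝓕` of rank `l`
containing `β`. -/
theorem clos_eq (hCS : IsConstructionScheme τ X₁ 𝓕) {l : ℕ} {F : Finset Ordinal}
    (hF : F ∈ 𝓕) (hcard : F.card = τ.m l) {β : Ordinal} (hβ : β ∈ F) :
    csClos τ 𝓕 X₁ l β = ↑F ∩ Set.Iic β := by
  ext γ
  constructor
  · rintro ⟨hγX, hγβ, hρ⟩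
    have hβX : β ∈ X₁ := hCS.subset_X F hF hβ
    obtain ⟨E0, hE0, hsub⟩ := hCS.cofinal {γ, β} (by
      intro y hy
      simp only [Finset.coe_insert, Finset.coe_singleton, Set.mem_insert_iff,
        Set.mem_singleton_iff] at hy
      rcases hy with rfl | rfl
      · exact hγX
      · exact hβX)
    obtain ⟨k0, hk0⟩ := hCS.card_mem E0 hE0
    have hne : {k | ∃ E ∈ 𝓕, E.card = τ.m k ∧ γ ∈ E ∧ β ∈ E}.Nonempty :=
      ⟨k0, E0, hE0, hk0, hsub (Finset.mem_insert_self γ {β}),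
        hsub (by simp)⟩
    have hmem := Nat.sInf_mem hne
    obtain ⟨E, hE, hEcard, hγE, hβE⟩ := hmem
    have hple : sInf {k | ∃ E ∈ 𝓕, E.card = τ.m k ∧ γ ∈ E ∧ β ∈ E} ≤ l := hρ
    obtain ⟨F', hF', hF'card, hβF', hF'F⟩ :=
      downward hCS l _ hple F hF hcard β hβ
    obtain ⟨-, hseg⟩ := hCS.initSeg _ E hE F' hF' hEcard hF'card
    have hγ' : γ ∈ E ∩ F' :=
      hseg β (Finset.mem_inter.mpr ⟨hβE, hβF'⟩) γ hγE hγβ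
    exact ⟨hF'F (Finset.mem_inter.mp hγ').2, hγβ⟩
  · rintro ⟨hγF, hγβ⟩
    have hγF' : γ ∈ F := hγF
    exact ⟨hCS.subset_X F hF hγF', hγβ,
      Nat.sInf_le ⟨F, hF, hcard, hγF', hβ⟩⟩

theorem clos_ncard (hCS : IsConstructionScheme τ X₁ 𝓕) {l : ℕ} {F : Finset Ordinal}
    (hF : F ∈ 𝓕) (hcard : F.card = τ.m l) {β : Ordinal} (hβ : β ∈ F) :
    (csClos τ 𝓕 X₁ l β).ncard = (F.filter (· ≤ β)).card := by
  have h1 : csClos τ 𝓕 X₁ l β = ↑(F.filter (· ≤ β)) := by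
    rw [clos_eq hCS hF hcard hβ]
    ext x
    simp only [Finset.coe_filter, Set.mem_setOf_eq, Set.mem_inter_iff,
      Finset.mem_coe, Set.mem_Iic]
  rw [h1, Set.ncard_coe_finset]

/-- Upward: every element of rank `k` is contained in an element of any rank `l ≥ k`. -/
theorem upward (hCS : IsConstructionScheme τ X₁ 𝓕) {k : ℕ} {G : Finset Ordinal}
    (hG : G ∈ 𝓕) (hcard : G.card = τ.m k) {l : ℕ} (hkl : k ≤ l) :
    ∃ H, H ∈ 𝓕 ∧ H.card = τ.m l ∧ G ⊆ H := by
  classical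
  set N : Finset Ordinal := (Finset.range (τ.m l + 1)).image (fun n : ℕ => (n : Ordinal))
    with hN
  have hNX : ↑N ⊆ X₁ := by
    intro y hy
    simp only [hN, Finset.coe_image, Set.mem_image, Finset.mem_coe,
      Finset.mem_range] at hy
    obtain ⟨n, -, rfl⟩ := hy
    exact lt_of_lt_of_le (Ordinal.nat_lt_omega0 n) (Ordinal.omega0_le_omega 1)
  have hAX : ↑(G ∪ N) ⊆ X₁ := by
    rw [Finset.coe_union]
    exact Set.union_subset (hCS.subset_X G hG) hNX
  obtain ⟨F, hF, hAF⟩ := hCS.cofinal (G ∪ N) hAX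
  obtain ⟨l', hl'⟩ := hCS.card_mem F hF
  have hNcard : N.card = τ.m l + 1 := by
    rw [hN, Finset.card_image_of_injective _ Nat.cast_injective, Finset.card_range]
  have hcardF : τ.m l + 1 ≤ F.card := by
    calc τ.m l + 1 = N.card := hNcard.symm
    _ ≤ (G ∪ N).card := Finset.card_le_card Finset.subset_union_right
    _ ≤ F.card := Finset.card_le_card hAF
  have hll' : l ≤ l' := by
    by_contra hcon
    push_neg at hcon
    have := τ.m_strictMono hcon
    omega
  have hGne : G.Nonempty := Finset.card_pos.mp (by rw [hcard]; exact τ.one_le_m k)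
  set x := G.max' hGne with hx
  have hxF : x ∈ F := hAF (Finset.mem_union_left N (G.max'_mem hGne))
  obtain ⟨Q, hQ, hQcard, hxQ, hQF⟩ := downward hCS l' l hll' F hF hl' x hxF
  obtain ⟨P, hP, hPcard, hxP, hPQ⟩ := downward hCS l k hkl Q hQ hQcard x hxQ
  obtain ⟨-, hseg⟩ := hCS.initSeg k G hG P hP hcard hPcard
  refine ⟨Q, hQ, hQcard, fun d hd => ?_⟩
  have hmem : d ∈ G ∩ P :=
    hseg x (Finset.mem_inter.mpr ⟨G.max'_mem hGne, hxP⟩) d hd (G.le_max' d hd)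
  exact hPQ (Finset.mem_inter.mp hmem).2

/-- If `α ≤ β` lie in a common element of rank `p`, then for all `l ≥ p`,
`|(α)_l| ≤ |(β)_l|`. -/
theorem clos_ncard_le (hCS : IsConstructionScheme τ X₁ 𝓕) {p : ℕ}
    {E : Finset Ordinal} (hE : E ∈ 𝓕) (hcard : E.card = τ.m p)
    {α β : Ordinal} (hα : α ∈ E) (hβ : β ∈ E) (hαβ : α ≤ β)
    {l : ℕ} (hpl : p ≤ l) :
    (csClos τ 𝓕 X₁ l α).ncard ≤ (csClos τ 𝓕 X₁ l β).ncard := by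
  obtain ⟨H, hH, hHcard, hEH⟩ := upward hCS hE hcard hpl
  rw [clos_eq hCS hH hHcard (hEH hα), clos_eq hCS hH hHcard (hEH hβ)]
  exact Set.ncard_le_ncard
    (Set.inter_subset_inter_right _ (Set.Iic_subset_Iic.mpr hαβ))
    (H.finite_toSet.inter_of_left _)

end Aux
section Aux2

variable {τ : CSType} {𝓕 : Set (Finset Ordinal)}

local notation "X₁" => Set.Iio (Ordinal.omega 1)

theorem CanonDecomp.root_subset {k : ℕ} {E : Finset Ordinal}
    {D : Fin (τ.n (k + 1)) → Finset Ordinal} {R : Finset Ordinal}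
    (hcd : CanonDecomp τ 𝓕 k E D R) (i : Fin (τ.n (k + 1))) : R ⊆ D i := by
  have hn : 2 ≤ τ.n (k + 1) := τ.n_ge (k + 1) (by omega)
  haveI : Nontrivial (Fin (τ.n (k + 1))) := Fin.nontrivial_iff_two_le.mpr hn
  obtain ⟨j, hj⟩ := exists_ne i
  rw [← hcd.2.2.2.1 j i hj]
  exact Finset.inter_subset_right

theorem CanonDecomp.piece_subset {k : ℕ} {E : Finset Ordinal}
    {D : Fin (τ.n (k + 1)) → Finset Ordinal} {R : Finset Ordinal}
    (hcd : CanonDecomp τ 𝓕 k E D R) (i : Fin (τ.n (k + 1))) : D i ⊆ E :=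
  fun y hy => (hcd.2.1 y).2 ⟨i, hy⟩

/-- If `x ∈ R` then everything in `E` below `x` is in `R`. -/
theorem CanonDecomp.filter_subset_root {k : ℕ} {E : Finset Ordinal}
    {D : Fin (τ.n (k + 1)) → Finset Ordinal} {R : Finset Ordinal}
    (hcd : CanonDecomp τ 𝓕 k E D R) {x : Ordinal} (hx : x ∈ R) :
    E.filter (· ≤ x) ⊆ R := by
  intro e he
  rw [Finset.mem_filter] at he
  obtain ⟨heE, hex⟩ := he
  obtain ⟨t, het⟩ := (hcd.2.1 e).1 heE
  by_contra heR
  exact absurd hex (not_le.mpr (hcd.2.2.2.2.1 x hx t e het heR))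

/-- If `x ∈ D i`, `x ∉ R`, then the part of `D i` below `x` has size `> r`. -/
theorem CanonDecomp.root_lt_filter {k : ℕ} {E : Finset Ordinal}
    {D : Fin (τ.n (k + 1)) → Finset Ordinal} {R : Finset Ordinal}
    (hcd : CanonDecomp τ 𝓕 k E D R) {x : Ordinal} {i : Fin (τ.n (k + 1))}
    (hx : x ∈ D i) (hxR : x ∉ R) :
    τ.r (k + 1) + 1 ≤ ((D i).filter (· ≤ x)).card := by
  have hsub : insert x R ⊆ (D i).filter (· ≤ x) := by
    intro a ha
    rw [Finset.mem_insert] at ha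
    rcases ha with rfl | haR
    · exact Finset.mem_filter.mpr ⟨hx, le_refl _⟩
    · exact Finset.mem_filter.mpr ⟨hcd.root_subset i haR,
        le_of_lt (hcd.2.2.2.2.1 a haR i x hx hxR)⟩
  calc τ.r (k + 1) + 1 = (insert x R).card := by
        rw [Finset.card_insert_of_notMem hxR, hcd.2.2.1]
  _ ≤ _ := Finset.card_le_card hsub

/-- The key counting formula. -/
theorem CanonDecomp.count_formula {k : ℕ} {E : Finset Ordinal}
    {D : Fin (τ.n (k + 1)) → Finset Ordinal} {R : Finset Ordinal}
    (hcd : CanonDecomp τ 𝓕 k E D R) {x : Ordinal} {i : Fin (τ.n (k + 1))}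
    (hx : x ∈ D i) (hxR : x ∉ R) :
    (E.filter (· ≤ x)).card
      = (i : ℕ) * (τ.m k - τ.r (k + 1)) + ((D i).filter (· ≤ x)).card := by
  classical
  obtain ⟨hD, hDF, hR, hinter, hroot, hblocks⟩ := hcd
  set P : Finset (Fin (τ.n (k + 1))) := Finset.univ.filter (fun t => t < i) with hP
  set B : Finset Ordinal := P.biUnion (fun t => D t \ R) with hB
  have hsplit : E.filter (· ≤ x) = B ∪ (D i).filter (· ≤ x) := by
    ext e
    constructor
    · intro he
      rw [Finset.mem_filter] at he
      obtain ⟨heE, hex⟩ := he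
      obtain ⟨t, het⟩ := (hDF e).1 heE
      by_cases heR : e ∈ R
      · exact Finset.mem_union_right _ (Finset.mem_filter.mpr
          ⟨CanonDecomp.root_subset ⟨hD, hDF, hR, hinter, hroot, hblocks⟩ i heR, hex⟩)
      · rcases lt_trichotomy t i with hti | hti | hti
        · refine Finset.mem_union_left _ (Finset.mem_biUnion.mpr
            ⟨t, Finset.mem_filter.mpr ⟨Finset.mem_univ t, hti⟩,
              Finset.mem_sdiff.mpr ⟨het, heR⟩⟩)
        · subst hti
          exact Finset.mem_union_right _ (Finset.mem_filter.mpr ⟨het, hex⟩)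
        · exact absurd hex (not_le.mpr (hblocks i t hti x hx hxR e het heR))
    · intro he
      rcases Finset.mem_union.mp he with he | he
      · obtain ⟨t, htP, het⟩ := Finset.mem_biUnion.mp he
        have hti : t < i := (Finset.mem_filter.mp htP).2
        obtain ⟨het', heR⟩ := Finset.mem_sdiff.mp het
        exact Finset.mem_filter.mpr ⟨(hDF e).2 ⟨t, het'⟩,
          le_of_lt (hblocks t i hti e het' heR x hx hxR)⟩
      · obtain ⟨heD, hex⟩ := Finset.mem_filter.mp he
        exact Finset.mem_filter.mpr ⟨(hDF e).2 ⟨i, heD⟩, hex⟩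
  have hdisj : Disjoint B ((D i).filter (· ≤ x)) := by
    rw [Finset.disjoint_left]
    intro e heB heF
    obtain ⟨t, htP, het⟩ := Finset.mem_biUnion.mp heB
    have hti : t < i := (Finset.mem_filter.mp htP).2
    obtain ⟨het', heR⟩ := Finset.mem_sdiff.mp het
    have : e ∈ D t ∩ D i := Finset.mem_inter.mpr ⟨het', (Finset.mem_filter.mp heF).1⟩
    rw [hinter t i (ne_of_lt hti)] at this
    exact heR this
  have hcardB : B.card = (i : ℕ) * (τ.m k - τ.r (k + 1)) := by
    rw [hB, Finset.card_biUnion]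
    · have heach : ∀ t ∈ P, (D t \ R).card = τ.m k - τ.r (k + 1) := by
        intro t _
        rw [Finset.card_sdiff_of_subset (CanonDecomp.root_subset
          ⟨hD, hDF, hR, hinter, hroot, hblocks⟩ t), (hD t).2, hR]
      rw [Finset.sum_congr rfl heach, Finset.sum_const, smul_eq_mul]
      congr 1
      have : P = Finset.Iio i := by ext t; simp [hP]
      rw [this, Fin.card_Iio]
    · intro t _ t' _ hne
      rw [Function.onFun, Finset.disjoint_left]
      intro e het het'
      obtain ⟨he1, heR⟩ := Finset.mem_sdiff.mp het
      have : e ∈ D t ∩ D t' := Finset.mem_inter.mpr ⟨he1, (Finset.mem_sdiff.mp het').1⟩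
      rw [hinter t t' hne] at this
      exact heR this
  rw [hsplit, Finset.card_union_of_disjoint hdisj, hcardB]

theorem arith_helper {b r i0 i1 s0 s1 : ℕ} (h0 : r < s0) (h0' : s0 ≤ r + b)
    (h1 : r < s1) (h1' : s1 ≤ r + b) (heq : i0 * b + s0 = i1 * b + s1) :
    s0 = s1 := by
  have key : ∀ a c s t : ℕ, s ≤ r + b → r < t → a < c → a * b + s < c * b + t := by
    intro a c s t hs ht hac
    calc a * b + s ≤ a * b + (r + b) := Nat.add_le_add_left hs _
    _ = (a + 1) * b + r := by ring
    _ < (a + 1) * b + t := Nat.add_lt_add_left ht _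
    _ ≤ c * b + t := Nat.add_le_add_right (Nat.mul_le_mul_right b hac) _
  rcases lt_trichotomy i0 i1 with h | h | h
  · exact absurd heq (ne_of_lt (key i0 i1 s0 s1 h0' h1 h))
  · subst h; omega
  · exact absurd heq.symm (ne_of_lt (key i1 i0 s1 s0 h1' h0 h))

end Aux2
section Aux3

variable {τ : CSType} {𝓕 : Set (Finset Ordinal)}

local notation "X₁" => Set.Iio (Ordinal.omega 1)

theorem eq_below (hCS : IsConstructionScheme τ X₁ 𝓕) :
    ∀ k (E0 E1 : Finset Ordinal), E0 ∈ 𝓕 → E1 ∈ 𝓕 →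
      E0.card = τ.m k → E1.card = τ.m k →
      ∀ α ∈ E0, ∀ β ∈ E1,
      (E0.filter (· ≤ α)).card = (E1.filter (· ≤ β)).card →
      ∀ l, l ≤ k →
      (csClos τ 𝓕 X₁ l α).ncard = (csClos τ 𝓕 X₁ l β).ncard := by
  intro k
  induction k with
  | zero =>
    intro E0 E1 hE0 hE1 hc0 hc1 α hα β hβ heq l hl
    interval_cases l
    rw [clos_ncard hCS hE0 hc0 hα, clos_ncard hCS hE1 hc1 hβ]
    exact heq
  | succ j ih =>
    intro E0 E1 hE0 hE1 hc0 hc1 α hα β hβ heq l hl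
    rcases Nat.eq_or_lt_of_le hl with rfl | hlt
    · rw [clos_ncard hCS hE0 hc0 hα, clos_ncard hCS hE1 hc1 hβ]
      exact heq
    have hlj : l ≤ j := Nat.lt_succ_iff.mp hlt
    obtain ⟨D0, ⟨R0, hcd0⟩, -⟩ := hCS.decomp j E0 hE0 hc0
    obtain ⟨D1, ⟨R1, hcd1⟩, -⟩ := hCS.decomp j E1 hE1 hc1
    have hrj : τ.r (j + 1) < τ.m j := τ.r_lt j
    by_cases hαR : α ∈ R0
    · -- both in root
      have hβR : β ∈ R1 := by
        by_contra hβR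
        obtain ⟨i1, hi1⟩ := (hcd1.2.1 β).1 hβ
        have h1 : τ.r (j + 1) + 1 ≤ ((D1 i1).filter (· ≤ β)).card :=
          hcd1.root_lt_filter hi1 hβR
        have h2 : ((D1 i1).filter (· ≤ β)).card ≤ (E1.filter (· ≤ β)).card :=
          Finset.card_le_card
            (Finset.filter_subset_filter _ (hcd1.piece_subset i1))
        have h3 : (E0.filter (· ≤ α)).card ≤ τ.r (j + 1) := by
          calc (E0.filter (· ≤ α)).card ≤ R0.card :=
              Finset.card_le_card (hcd0.filter_subset_root hαR)
          _ = τ.r (j + 1) := hcd0.2.2.1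
        omega
      have hn : 0 < τ.n (j + 1) := by have := τ.n_ge (j + 1) (by omega); omega
      set t0 : Fin (τ.n (j + 1)) := ⟨0, hn⟩ with ht0
      have hE0eq : E0.filter (· ≤ α) = (D0 t0).filter (· ≤ α) := by
        apply Finset.Subset.antisymm
        · intro e he
          have heR : e ∈ R0 := hcd0.filter_subset_root hαR he
          exact Finset.mem_filter.mpr ⟨hcd0.root_subset t0 heR,
            (Finset.mem_filter.mp he).2⟩
        · exact Finset.filter_subset_filter _ (hcd0.piece_subset t0)
      have hE1eq : E1.filter (· ≤ β) = (D1 t0).filter (· ≤ β) := by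
        apply Finset.Subset.antisymm
        · intro e he
          have heR : e ∈ R1 := hcd1.filter_subset_root hβR he
          exact Finset.mem_filter.mpr ⟨hcd1.root_subset t0 heR,
            (Finset.mem_filter.mp he).2⟩
        · exact Finset.filter_subset_filter _ (hcd1.piece_subset t0)
      exact ih (D0 t0) (D1 t0) (hcd0.1 t0).1 (hcd1.1 t0).1 (hcd0.1 t0).2
        (hcd1.1 t0).2 α (hcd0.root_subset t0 hαR) β (hcd1.root_subset t0 hβR)
        (by rw [← hE0eq, ← hE1eq]; exact heq) l hlj
    · -- neither in root
      obtain ⟨i0, hi0⟩ := (hcd0.2.1 α).1 hα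
      have hβR : β ∉ R1 := by
        intro hβR
        have h1 : τ.r (j + 1) + 1 ≤ ((D0 i0).filter (· ≤ α)).card :=
          hcd0.root_lt_filter hi0 hαR
        have h2 : ((D0 i0).filter (· ≤ α)).card ≤ (E0.filter (· ≤ α)).card :=
          Finset.card_le_card
            (Finset.filter_subset_filter _ (hcd0.piece_subset i0))
        have h3 : (E1.filter (· ≤ β)).card ≤ τ.r (j + 1) := by
          calc (E1.filter (· ≤ β)).card ≤ R1.card :=
              Finset.card_le_card (hcd1.filter_subset_root hβR)
          _ = τ.r (j + 1) := hcd1.2.2.1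
        omega
      obtain ⟨i1, hi1⟩ := (hcd1.2.1 β).1 hβ
      have hf0 := hcd0.count_formula hi0 hαR
      have hf1 := hcd1.count_formula hi1 hβR
      have hs0lo : τ.r (j + 1) < ((D0 i0).filter (· ≤ α)).card :=
        hcd0.root_lt_filter hi0 hαR
      have hs1lo : τ.r (j + 1) < ((D1 i1).filter (· ≤ β)).card :=
        hcd1.root_lt_filter hi1 hβR
      have hs0hi : ((D0 i0).filter (· ≤ α)).card ≤ τ.m j := by
        rw [← (hcd0.1 i0).2]; exact Finset.card_le_card (Finset.filter_subset _ _)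
      have hs1hi : ((D1 i1).filter (· ≤ β)).card ≤ τ.m j := by
        rw [← (hcd1.1 i1).2]; exact Finset.card_le_card (Finset.filter_subset _ _)
      rw [hf0, hf1] at heq
      have hs : ((D0 i0).filter (· ≤ α)).card = ((D1 i1).filter (· ≤ β)).card :=
        arith_helper hs0lo (by omega) hs1lo (by omega) heq
      exact ih (D0 i0) (D1 i1) (hcd0.1 i0).1 (hcd1.1 i1).1 (hcd0.1 i0).2
        (hcd1.1 i1).2 α hi0 β hi1 hs l hlj

end Aux3
/-- For a 2-capturing construction scheme over `ω₁`, the family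
`B_𝓕 = {f_α}` with `f_α(l) = |(α)_l|`, ordered by pointwise domination, contains
no uncountable set of pairwise incomparable elements. -/
theorem stmt17 (τ : CSType) (𝓕 : Set (Finset Ordinal))
    (hCS : IsConstructionScheme τ (Set.Iio (Ordinal.omega 1)) 𝓕)
    (hcap : TwoCapturing τ (Set.Iio (Ordinal.omega 1)) 𝓕) :
    ¬ ∃ S : Set Ordinal, S ⊆ (Set.Iio (Ordinal.omega 1)) ∧ ¬ S.Countable ∧
      ∀ α ∈ S, ∀ β ∈ S, α ≠ β →
        ¬ (∀ l : ℕ, (csClos τ 𝓕 (Set.Iio (Ordinal.omega 1)) l α).ncard ≤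
            (csClos τ 𝓕 (Set.Iio (Ordinal.omega 1)) l β).ncard) ∧
        ¬ (∀ l : ℕ, (csClos τ 𝓕 (Set.Iio (Ordinal.omega 1)) l β).ncard ≤
            (csClos τ 𝓕 (Set.Iio (Ordinal.omega 1)) l α).ncard) := by
  rintro ⟨S, hSX, hSc, hinc⟩
  obtain ⟨k, -, F, α, β, hαS, hβS, hαβ, hcap'⟩ := hcap S hSX hSc 0
  obtain ⟨hF, hFcard, D, R, hcd, h0, h1, hαD, hαR, hβD, hβR, hbij⟩ := hcap'
  have hD0 := (hcd.1 ⟨0, h0⟩).1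
  have hD0card := (hcd.1 ⟨0, h0⟩).2
  have hD1 := (hcd.1 ⟨1, h1⟩).1
  have hD1card := (hcd.1 ⟨1, h1⟩).2
  have hfilter : ((D ⟨0, h0⟩).filter (· ≤ α)).card
      = ((D ⟨1, h1⟩).filter (· ≤ β)).card := by
    have e0 : (((D ⟨0, h0⟩ : Finset Ordinal) : Set Ordinal) ∩ Set.Iic α).ncard
        = ((D ⟨0, h0⟩).filter (· ≤ α)).card := by
      rw [← clos_eq hCS hD0 hD0card hαD, clos_ncard hCS hD0 hD0card hαD]
    have e1 : (((D ⟨1, h1⟩ : Finset Ordinal) : Set Ordinal) ∩ Set.Iic β).ncard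
        = ((D ⟨1, h1⟩).filter (· ≤ β)).card := by
      rw [← clos_eq hCS hD1 hD1card hβD, clos_ncard hCS hD1 hD1card hβD]
    rw [← e0, ← e1]
    exact hbij
  have hαF : α ∈ F := (hcd.2.1 α).2 ⟨⟨0, h0⟩, hαD⟩
  have hβF : β ∈ F := (hcd.2.1 β).2 ⟨⟨1, h1⟩, hβD⟩
  have hle : ∀ l : ℕ, (csClos τ 𝓕 (Set.Iio (Ordinal.omega 1)) l α).ncard ≤
      (csClos τ 𝓕 (Set.Iio (Ordinal.omega 1)) l β).ncard := by
    intro l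
    rcases le_or_gt l k with hl | hl
    · exact le_of_eq (eq_below hCS k (D ⟨0, h0⟩) (D ⟨1, h1⟩) hD0 hD1
        hD0card hD1card α hαD β hβD hfilter l hl)
    · exact clos_ncard_le hCS hF hFcard hαF hβF (le_of_lt hαβ) hl
  exact absurd hle (hinc α hαS β hβS (ne_of_lt hαβ)).1
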